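/- arXiv:1005.2890 — 3 statements merged into one kernel-verified Lean document; each statement's English description precedes it below -/
import Mathlib

section
/- The kernel of the collision operator Q on L²_M consists exactly of the real multiples of the Maxwellian: Q(f) = 0 if and only if there exists α ∈ ℝ with f(v) = α M(v) almost everywhere. -/
open MeasureTheory Real

/-- Velocity space ℝ³ as ℝ × ℝ × ℝ : `v.1 = v_x`, `v.2.1 = v_y`, `v.2.2 = v_z`. -/
abbrev V : Type := ℝ × ℝ × ℝ

/-- Rotation around the z-axis by angle τ. -/
noncomputable def Rot (τ : ℝ) (v : V) : V :=
  (Real.cos τ * v.1 + Real.sin τ * v.2.1,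
   -Real.sin τ * v.1 + Real.cos τ * v.2.1,
   v.2.2)

/-- The normalized Maxwellian `M(v) = (2π)^{-3/2} exp(-|v|²/2)`. -/
noncomputable def Maxw (v : V) : ℝ :=
  (2 * Real.pi) ^ (-(3:ℝ)/2) * Real.exp (-(v.1^2 + v.2.1^2 + v.2.2^2)/2)

/-- Cylindrical average `A(h)(v) = (1/2π) ∫₀^{2π} h(R(τ)v) dτ`. -/
noncomputable def cylAvg (h : V → ℝ) (v : V) : ℝ :=
  (1/(2*Real.pi)) * ∫ τ in (0:ℝ)..(2*Real.pi), h (Rot τ v)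

/-- The linear Boltzmann collision operator
`Q(f)(v) = ∫ σ(v,v') [M(v) f(v') - M(v') f(v)] dv'`. -/
noncomputable def Qop (σ : V → V → ℝ) (f : V → ℝ) (v : V) : ℝ :=
  ∫ v' : V, σ v v' * (Maxw v * f v' - Maxw v' * f v)

lemma Maxw_pos (v : V) : 0 < Maxw v := by
  unfold Maxw; positivity

lemma Maxw_continuous : Continuous Maxw := by
  unfold Maxw; fun_prop

lemma Maxw_integrable : Integrable Maxw (volume : Measure V) := by
  have hG : Integrable (fun x : ℝ => Real.exp (-(1/2) * x^2)) :=
    integrable_exp_neg_mul_sq (by norm_num)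
  have h2 : Integrable (fun p : ℝ × ℝ =>
      Real.exp (-(1/2) * p.1^2) * Real.exp (-(1/2) * p.2^2)) (volume.prod volume) :=
    hG.mul_prod hG
  rw [← Measure.volume_eq_prod] at h2
  have h3 : Integrable (fun p : ℝ × (ℝ × ℝ) =>
      Real.exp (-(1/2) * p.1^2) * (Real.exp (-(1/2) * p.2.1^2) * Real.exp (-(1/2) * p.2.2^2)))
      (volume.prod volume) := hG.mul_prod h2
  rw [← Measure.volume_eq_prod] at h3
  refine (h3.const_mul ((2 * Real.pi) ^ (-(3:ℝ)/2))).congr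
    (Filter.Eventually.of_forall fun v => ?_)
  simp only [← Real.exp_add]
  unfold Maxw
  have he : -(1/2) * v.1^2 + (-(1/2) * v.2.1^2 + -(1/2) * v.2.2^2)
      = -(v.1^2 + v.2.1^2 + v.2.2^2)/2 := by ring
  rw [he]

/-- the kernel of `Q` on `L²_M` is the line spanned by the Maxwellian. -/
theorem collision_kernel (σ : V → V → ℝ) (α₁ α₂ : ℝ) (hα₁ : 0 < α₁)
    (hσmeas : Measurable (Function.uncurry σ))
    (hσsym : ∀ v v' : V, σ v v' = σ v' v)
    (hσbound : ∀ v v' : V, α₁ ≤ σ v v' ∧ σ v v' ≤ α₂)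
    (f : V → ℝ) (hfmeas : AEStronglyMeasurable f (volume : Measure V))
    (hf : Integrable (fun v => (f v)^2 / Maxw v) (volume : Measure V)) :
    (∀ᵐ v : V ∂(volume : Measure V), Qop σ f v = 0) ↔
      ∃ α : ℝ, ∀ᵐ v : V ∂(volume : Measure V), f v = α * Maxw v := by
  have Mpos : ∀ v : V, 0 < Maxw v := Maxw_pos
  have hσpos : ∀ v v' : V, 0 < σ v v' := fun v v' => hα₁.trans_le (hσbound v v').1
  constructor
  · intro hQ
    set g : V → ℝ := fun v => f v / Maxw v with hgdef
    have hfg : ∀ v, f v = g v * Maxw v := fun v => by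
      simp only [hgdef]
      rw [div_mul_cancel₀ _ (Mpos v).ne']
    have hgmeas : AEStronglyMeasurable g (volume : Measure V) := by
      have hginv : Continuous fun v : V => (Maxw v)⁻¹ :=
        Maxw_continuous.inv₀ fun v => (Maxw_pos v).ne'
      simp only [hgdef, div_eq_mul_inv]
      exact hfmeas.mul hginv.aestronglyMeasurable
    have hMint := Maxw_integrable
    have hf1 : Integrable f (volume : Measure V) := by
      refine ((hf.add hMint).const_mul (1/2)).mono' hfmeas
        (Filter.Eventually.of_forall fun v => ?_)
      have hm := Mpos v
      have h1 : f v ^ 2 = (f v ^ 2 / Maxw v) * Maxw v := (div_mul_cancel₀ _ hm.ne').symm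
      rw [Real.norm_eq_abs]
      simp only [Pi.add_apply]
      nlinarith [sq_nonneg (|f v| - Maxw v), sq_abs (f v), abs_nonneg (f v)]
    set P : V × V → ℝ :=
      fun p => g p.1 * (σ p.1 p.2 * (Maxw p.1 * f p.2 - Maxw p.2 * f p.1)) with hPdef
    have hσmeas' : AEStronglyMeasurable (fun p : V × V => σ p.1 p.2)
        ((volume : Measure V).prod volume) := hσmeas.aestronglyMeasurable
    have hMm : AEStronglyMeasurable Maxw (volume : Measure V) :=
      Maxw_continuous.aestronglyMeasurable
    have hPmeas : AEStronglyMeasurable P ((volume : Measure V).prod volume) :=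
      hgmeas.comp_fst.mul (hσmeas'.mul ((hMm.comp_fst.mul hfmeas.comp_snd).sub (hMm.comp_snd.mul hfmeas.comp_fst)))
    have hPint : Integrable P ((volume : Measure V).prod volume) := by
      refine (((hf1.abs.mul_prod hf1.abs).add (hf.mul_prod hMint)).const_mul α₂).mono'
        hPmeas (Filter.Eventually.of_forall fun p => ?_)
      simp only [hPdef, Pi.add_apply, Real.norm_eq_abs]
      have hm1 := Mpos p.1
      have hm2 := Mpos p.2
      have hσp := hσpos p.1 p.2
      have hσ2 := (hσbound p.1 p.2).2
      have e1 : g p.1 * Maxw p.1 = f p.1 := (hfg p.1).symm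
      have e2 : g p.1 * f p.1 = f p.1 ^ 2 / Maxw p.1 := by
        simp only [hgdef]
        rw [div_mul_eq_mul_div, ← pow_two]
      have hg1M : |g p.1| * Maxw p.1 = |f p.1| := by
        rw [← abs_of_pos hm1, ← abs_mul, e1]
      have hg1f : |g p.1| * |f p.1| = f p.1 ^ 2 / Maxw p.1 := by
        rw [← abs_mul, e2, abs_of_nonneg (by positivity)]
      have habs : |Maxw p.1 * f p.2 - Maxw p.2 * f p.1|
          ≤ Maxw p.1 * |f p.2| + Maxw p.2 * |f p.1| := by
        calc |Maxw p.1 * f p.2 - Maxw p.2 * f p.1|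
            ≤ |Maxw p.1 * f p.2| + |Maxw p.2 * f p.1| := abs_sub _ _
          _ = Maxw p.1 * |f p.2| + Maxw p.2 * |f p.1| := by
              rw [abs_mul, abs_mul, abs_of_pos hm1, abs_of_pos hm2]
      rw [abs_mul, abs_mul, abs_of_pos hσp]
      calc |g p.1| * (σ p.1 p.2 * |Maxw p.1 * f p.2 - Maxw p.2 * f p.1|)
          ≤ |g p.1| * (α₂ * (Maxw p.1 * |f p.2| + Maxw p.2 * |f p.1|)) := by
            refine mul_le_mul_of_nonneg_left ?_ (abs_nonneg _)
            exact mul_le_mul hσ2 habs (abs_nonneg _) (hσp.le.trans hσ2)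
        _ = α₂ * (|g p.1| * Maxw p.1 * |f p.2| + |g p.1| * |f p.1| * Maxw p.2) := by ring
        _ = α₂ * (|f p.1| * |f p.2| + f p.1 ^ 2 / Maxw p.1 * Maxw p.2) := by
            rw [hg1M, hg1f]
    have hPswapint : Integrable (fun p : V × V => P (p.2, p.1))
        ((volume : Measure V).prod volume) := hPint.swap
    have hQP : ∫ p, P p ∂((volume : Measure V).prod volume) = 0 := by
      rw [MeasureTheory.integral_prod _ hPint]
      have h1 : ∀ v : V, (∫ v', P (v, v') ∂(volume : Measure V)) = g v * Qop σ f v := by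
        intro v
        simp only [hPdef, Qop]
        exact MeasureTheory.integral_const_mul _ _
      simp_rw [h1]
      refine integral_eq_zero_of_ae ?_
      filter_upwards [hQ] with v hv
      simp [hv]
    have hQPswap : ∫ p, P (p.2, p.1) ∂((volume : Measure V).prod volume) = 0 := by
      have : (fun p : V × V => P (p.2, p.1)) = fun p : V × V => P p.swap := rfl
      rw [this, MeasureTheory.integral_prod_swap P, hQP]
    have key : ∀ p : V × V, -(P p + P (p.2, p.1)) =
        σ p.1 p.2 * (Maxw p.1 * Maxw p.2 * (g p.1 - g p.2)^2) := by
      intro p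
      simp only [hPdef]
      rw [hσsym p.2 p.1, hfg p.1, hfg p.2]
      ring
    set N : V × V → ℝ := fun p => -(P p + P (p.2, p.1)) with hNdef
    have hNint : Integrable N ((volume : Measure V).prod volume) := (hPint.add hPswapint).neg
    have hNnonneg : 0 ≤ᵐ[(volume : Measure V).prod volume] N := by
      refine Filter.Eventually.of_forall fun p => ?_
      have := key p
      simp only [hNdef]
      rw [this]
      have := Mpos p.1
      have := Mpos p.2
      have := hσpos p.1 p.2
      positivity
    have hNzero : ∫ p, N p ∂((volume : Measure V).prod volume) = 0 := by
      simp only [hNdef]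
      rw [integral_neg, integral_add hPint hPswapint, hQP, hQPswap]
      norm_num
    have hN0 : N =ᵐ[(volume : Measure V).prod volume] 0 :=
      (integral_eq_zero_iff_of_nonneg_ae hNnonneg hNint).mp hNzero
    have hgg : ∀ᵐ p ∂((volume : Measure V).prod volume), g p.1 = g p.2 := by
      filter_upwards [hN0] with p hp
      have h1 : σ p.1 p.2 * (Maxw p.1 * Maxw p.2 * (g p.1 - g p.2)^2) = 0 := by
        rw [← key p]
        simpa [hNdef] using hp
      have h2 : (g p.1 - g p.2)^2 = 0 := by
        have hne : σ p.1 p.2 * (Maxw p.1 * Maxw p.2) ≠ 0 :=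
          (mul_pos (hσpos p.1 p.2) (mul_pos (Mpos p.1) (Mpos p.2))).ne'
        have : σ p.1 p.2 * (Maxw p.1 * Maxw p.2) * (g p.1 - g p.2)^2 = 0 := by
          rw [← h1]; ring
        exact (mul_eq_zero.mp this).resolve_left hne
      have := pow_eq_zero_iff (n := 2) (by norm_num) |>.mp h2
      linarith [sub_eq_zero.mp this]
    have hae : ∀ᵐ v ∂(volume : Measure V), ∀ᵐ v' ∂(volume : Measure V), g v = g v' :=
      Measure.ae_ae_of_ae_prod hgg
    have hvol_ne : (volume : Measure V) ≠ 0 := by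
      intro h0
      have hbox : (volume : Measure V)
          (Set.Icc (0:ℝ) 1 ×ˢ (Set.Icc (0:ℝ) 1 ×ˢ Set.Icc (0:ℝ) 1)) = 1 := by
        rw [Measure.volume_eq_prod, Measure.prod_prod, Measure.volume_eq_prod,
          Measure.prod_prod]
        simp [Real.volume_Icc]
      rw [h0] at hbox
      simp at hbox
    haveI : (ae (volume : Measure V)).NeBot := MeasureTheory.ae_neBot.mpr hvol_ne
    obtain ⟨v₀, hv₀⟩ := hae.exists
    refine ⟨g v₀, ?_⟩
    filter_upwards [hv₀] with v hv
    rw [hfg v, ← hv]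
  · rintro ⟨α, hα⟩
    filter_upwards [hα] with v hv
    unfold Qop
    have h0 : (fun v' => σ v v' * (Maxw v * f v' - Maxw v' * f v))
        =ᵐ[(volume : Measure V)] 0 := by
      filter_upwards [hα] with v' hv'
      simp only [Pi.zero_apply]
      rw [hv, hv']
      ring
    rw [integral_congr_ae h0]
    simp
end

section
/- In the relaxation-time case σ(v,v') = 1/τ with τ > 0, the solution X^η of −Q^η(X^η) = (v_⊥/η², v_z) M with ∫ X^η dv = 0 yields the explicit diffusion matrix D^η = τ · [[η²/(τ²+η⁴), τ/(τ²+η⁴), 0], [−τ/(τ²+η⁴), η²/(τ²+η⁴), 0], [0, 0, 1]]. In particular, for the z-component, X_z^η = τ v_z M and ∫ v_z X_z^η dv = τ. -/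
open MeasureTheory Real

/-- The gyration operator `G(f)(v) = (v × e_z)·∇_v f = v_y ∂_{v_x} f - v_x ∂_{v_y} f`. -/
noncomputable def gyro (f : V → ℝ) (v : V) : ℝ :=
  v.2.1 * fderiv ℝ f v (1, 0, 0) - v.1 * fderiv ℝ f v (0, 1, 0)

/-- Relaxation-time collision operator `Q(f) = (1/τ)[(∫ f dv') M - f]`,
i.e. the operator `Qop` with `σ(v,v') = 1/τ`. -/
noncomputable def Qrel (τ : ℝ) (f : V → ℝ) (v : V) : ℝ :=
  (1/τ) * ((∫ v' : V, f v') * Maxw v - f v)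

/-- `Q^η = Q - (1/η²)(v × e_z)·∇_v` in the relaxation-time case. -/
noncomputable def Qηrel (τ η : ℝ) (f : V → ℝ) (v : V) : ℝ :=
  Qrel τ f v - (1/η^2) * gyro f v

namespace RelaxAux

noncomputable def lin (a b c : ℝ) : V →L[ℝ] ℝ :=
  a • (ContinuousLinearMap.fst ℝ ℝ (ℝ × ℝ))
    + b • ((ContinuousLinearMap.fst ℝ ℝ ℝ).comp (ContinuousLinearMap.snd ℝ ℝ (ℝ × ℝ)))
    + c • ((ContinuousLinearMap.snd ℝ ℝ ℝ).comp (ContinuousLinearMap.snd ℝ ℝ (ℝ × ℝ)))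

@[simp] lemma lin_apply (a b c : ℝ) (w : V) :
    lin a b c w = a * w.1 + b * w.2.1 + c * w.2.2 := by
  simp [lin]

lemma hasFDerivAt_Maxw (v : V) :
    HasFDerivAt Maxw (Maxw v • lin (-v.1) (-v.2.1) (-v.2.2)) v := by
  have h1 : HasFDerivAt (fun v : V => v.1) (ContinuousLinearMap.fst ℝ ℝ (ℝ × ℝ)) v :=
    hasFDerivAt_fst
  have h2 : HasFDerivAt (fun v : V => v.2.1)
      ((ContinuousLinearMap.fst ℝ ℝ ℝ).comp (ContinuousLinearMap.snd ℝ ℝ (ℝ × ℝ))) v :=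
    hasFDerivAt_fst.comp v hasFDerivAt_snd
  have h3 : HasFDerivAt (fun v : V => v.2.2)
      ((ContinuousLinearMap.snd ℝ ℝ ℝ).comp (ContinuousLinearMap.snd ℝ ℝ (ℝ × ℝ))) v :=
    hasFDerivAt_snd.comp v hasFDerivAt_snd
  have hq : HasFDerivAt (fun v : V => -(v.1^2 + v.2.1^2 + v.2.2^2)/2)
      (lin (-v.1) (-v.2.1) (-v.2.2)) v := by
    have hfun : (fun v : V => -(v.1^2 + v.2.1^2 + v.2.2^2)/2)
        = fun v : V => (-(1/2) : ℝ) * (v.1*v.1 + (v.2.1*v.2.1 + v.2.2*v.2.2)) := funext fun v => by ring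
    rw [hfun]
    have H := ((h1.mul h1).add ((h2.mul h2).add (h3.mul h3))).const_mul ((-(1/2) : ℝ))
    refine H.congr_fderiv ?_
    refine ContinuousLinearMap.ext fun w => ?_
    simp [lin]
    ring
  have H := (hq.exp).const_mul ((2 * Real.pi) ^ (-(3:ℝ)/2))
  have key : Maxw v • lin (-v.1) (-v.2.1) (-v.2.2)
      = (2 * Real.pi) ^ (-(3:ℝ)/2) • (Real.exp (-(v.1^2 + v.2.1^2 + v.2.2^2)/2) • lin (-v.1) (-v.2.1) (-v.2.2)) := by
    rw [smul_smul]; rfl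
  rw [key]
  exact H

lemma hasFDerivAt_P1 (v : V) :
    HasFDerivAt (fun w : V => w.1 * Maxw w)
      (Maxw v • lin (1 - v.1^2) (-(v.1*v.2.1)) (-(v.1*v.2.2))) v := by
  have H := (hasFDerivAt_fst (p := v)).mul (hasFDerivAt_Maxw v)
  have key : Maxw v • lin (1 - v.1^2) (-(v.1*v.2.1)) (-(v.1*v.2.2))
      = v.1 • (Maxw v • lin (-v.1) (-v.2.1) (-v.2.2)) + Maxw v • ContinuousLinearMap.fst ℝ ℝ (ℝ × ℝ) := by
    refine ContinuousLinearMap.ext fun w => ?_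
    simp [lin]
    ring
  rw [key]
  exact H

lemma hasFDerivAt_P2 (v : V) :
    HasFDerivAt (fun w : V => w.2.1 * Maxw w)
      (Maxw v • lin (-(v.1*v.2.1)) (1 - v.2.1^2) (-(v.2.1*v.2.2))) v := by
  have h2 : HasFDerivAt (fun v : V => v.2.1)
      ((ContinuousLinearMap.fst ℝ ℝ ℝ).comp (ContinuousLinearMap.snd ℝ ℝ (ℝ × ℝ))) v :=
    hasFDerivAt_fst.comp v hasFDerivAt_snd
  have H := h2.mul (hasFDerivAt_Maxw v)
  have key : Maxw v • lin (-(v.1*v.2.1)) (1 - v.2.1^2) (-(v.2.1*v.2.2))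
      = v.2.1 • (Maxw v • lin (-v.1) (-v.2.1) (-v.2.2))
        + Maxw v • ((ContinuousLinearMap.fst ℝ ℝ ℝ).comp (ContinuousLinearMap.snd ℝ ℝ (ℝ × ℝ))) := by
    refine ContinuousLinearMap.ext fun w => ?_
    simp [lin]
    ring
  rw [key]
  exact H

lemma hasFDerivAt_P3 (v : V) :
    HasFDerivAt (fun w : V => w.2.2 * Maxw w)
      (Maxw v • lin (-(v.1*v.2.2)) (-(v.2.1*v.2.2)) (1 - v.2.2^2)) v := by
  have h3 : HasFDerivAt (fun v : V => v.2.2)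
      ((ContinuousLinearMap.snd ℝ ℝ ℝ).comp (ContinuousLinearMap.snd ℝ ℝ (ℝ × ℝ))) v :=
    hasFDerivAt_snd.comp v hasFDerivAt_snd
  have H := h3.mul (hasFDerivAt_Maxw v)
  have key : Maxw v • lin (-(v.1*v.2.2)) (-(v.2.1*v.2.2)) (1 - v.2.2^2)
      = v.2.2 • (Maxw v • lin (-v.1) (-v.2.1) (-v.2.2))
        + Maxw v • ((ContinuousLinearMap.snd ℝ ℝ ℝ).comp (ContinuousLinearMap.snd ℝ ℝ (ℝ × ℝ))) := by
    refine ContinuousLinearMap.ext fun w => ?_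
    simp [lin]
    ring
  rw [key]
  exact H

lemma gyro_eq {f : V → ℝ} {D : V →L[ℝ] ℝ} {v : V} (h : HasFDerivAt f D v) :
    gyro f v = v.2.1 * D (1, 0, 0) - v.1 * D (0, 1, 0) := by
  unfold gyro
  rw [h.fderiv]

lemma gyro_combo (X : V → ℝ) (hX : Differentiable ℝ X) (a b c : ℝ) (v : V) :
    gyro (fun w => X w - (a * (w.1 * Maxw w) + b * (w.2.1 * Maxw w) + c * (w.2.2 * Maxw w))) v
      = gyro X v - (a * (v.2.1 * Maxw v) - b * (v.1 * Maxw v)) := by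
  have H : HasFDerivAt
      (fun w => X w - (a * (w.1 * Maxw w) + b * (w.2.1 * Maxw w) + c * (w.2.2 * Maxw w)))
      (fderiv ℝ X v -
        (a • (Maxw v • lin (1 - v.1^2) (-(v.1*v.2.1)) (-(v.1*v.2.2)))
          + b • (Maxw v • lin (-(v.1*v.2.1)) (1 - v.2.1^2) (-(v.2.1*v.2.2)))
          + c • (Maxw v • lin (-(v.1*v.2.2)) (-(v.2.1*v.2.2)) (1 - v.2.2^2)))) v :=
    ((hX v).hasFDerivAt).sub
      ((((hasFDerivAt_P1 v).const_mul a).add ((hasFDerivAt_P2 v).const_mul b)).add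
        ((hasFDerivAt_P3 v).const_mul c))
  rw [gyro_eq H]
  unfold gyro
  simp only [ContinuousLinearMap.coe_sub', Pi.sub_apply, ContinuousLinearMap.add_apply,
    ContinuousLinearMap.coe_smul', Pi.smul_apply, lin_apply, smul_eq_mul]
  ring

lemma vanish {c : ℝ} (hc : c ≠ 0) {f : V → ℝ} (hf : Differentiable ℝ f)
    (h : ∀ v, gyro f v = c * f v) : ∀ v, f v = 0 := by
  intro v
  have hγ : ∀ θ : ℝ, HasDerivAt (fun θ => Rot θ v)
      ((Rot θ v).2.1, -(Rot θ v).1, (0:ℝ)) θ := by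
    intro θ
    have hA : HasDerivAt (fun θ => Real.cos θ * v.1 + Real.sin θ * v.2.1)
        (-Real.sin θ * v.1 + Real.cos θ * v.2.1) θ :=
      ((Real.hasDerivAt_cos θ).mul_const v.1).add ((Real.hasDerivAt_sin θ).mul_const v.2.1)
    have hB : HasDerivAt (fun θ => -Real.sin θ * v.1 + Real.cos θ * v.2.1)
        (-(Real.cos θ * v.1 + Real.sin θ * v.2.1)) θ := by
      have H := (((Real.hasDerivAt_sin θ).neg).mul_const v.1).add
        ((Real.hasDerivAt_cos θ).mul_const v.2.1)
      refine H.congr_deriv ?_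
      ring
    have hABC : HasDerivAt (fun θ => Rot θ v)
        (-Real.sin θ * v.1 + Real.cos θ * v.2.1, -(Real.cos θ * v.1 + Real.sin θ * v.2.1), (0:ℝ)) θ :=
      hA.prodMk (hB.prodMk (hasDerivAt_const θ v.2.2))
    exact hABC
  have hg : ∀ θ : ℝ, HasDerivAt (fun θ => f (Rot θ v)) (c * f (Rot θ v)) θ := by
    intro θ
    have hd := ((hf (Rot θ v)).hasFDerivAt).comp_hasDerivAt θ (hγ θ)
    have hvec : ((Rot θ v).2.1, -(Rot θ v).1, (0:ℝ))
        = (Rot θ v).2.1 • ((1:ℝ), (0:ℝ), (0:ℝ)) + (-(Rot θ v).1) • ((0:ℝ), (1:ℝ), (0:ℝ)) := by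
      simp [Prod.ext_iff]
    rw [hvec, map_add, ContinuousLinearMap.map_smul, ContinuousLinearMap.map_smul] at hd
    have hgy := h (Rot θ v)
    unfold gyro at hgy
    have : (Rot θ v).2.1 • (fderiv ℝ f (Rot θ v)) ((1:ℝ), (0:ℝ), (0:ℝ))
        + (-(Rot θ v).1) • (fderiv ℝ f (Rot θ v)) ((0:ℝ), (1:ℝ), (0:ℝ)) = c * f (Rot θ v) := by
      simp only [smul_eq_mul]
      linarith [hgy]
    rw [this] at hd
    exact hd
  have hF : ∀ θ : ℝ, HasDerivAt (fun θ => f (Rot θ v) * Real.exp (-(c * θ))) 0 θ := by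
    intro θ
    have he : HasDerivAt (fun θ : ℝ => Real.exp (-(c * θ))) (Real.exp (-(c * θ)) * (-(c * 1))) θ :=
      (((hasDerivAt_id θ).const_mul c).neg).exp
    have H := (hg θ).mul he
    refine H.congr_deriv ?_
    ring
  have hconst := is_const_of_deriv_eq_zero (fun θ => (hF θ).differentiableAt)
    (fun θ => (hF θ).deriv) (2 * Real.pi) 0
  have h2π : Rot (2 * Real.pi) v = v := by
    simp [Rot]
  have h0 : Rot 0 v = v := by
    simp [Rot]
  rw [h2π, h0, mul_zero, neg_zero, Real.exp_zero, mul_one] at hconst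
  by_contra hfv
  have hexp : Real.exp (-(c * (2 * Real.pi))) = 1 :=
    mul_left_cancel₀ hfv (by rw [hconst, mul_one])
  rw [Real.exp_eq_one_iff] at hexp
  have : c * (2 * Real.pi) = 0 := by linarith
  rcases mul_eq_zero.mp this with h' | h'
  · exact hc h'
  · nlinarith [Real.pi_pos]

/-! ### 1D Gaussian facts -/

lemma expform : (fun x : ℝ => Real.exp (-x^2/2)) = fun x : ℝ => Real.exp (-(1/2) * x^2) :=
  funext fun x => by rw [show -x^2/2 = -(1/2) * x^2 by ring]

lemma integrable_exp2 : Integrable (fun x : ℝ => Real.exp (-x^2/2)) := by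
  rw [expform]; exact integrable_exp_neg_mul_sq (by norm_num)

lemma integrable_xexp : Integrable (fun x : ℝ => x * Real.exp (-x^2/2)) := by
  rw [show (fun x : ℝ => x * Real.exp (-x^2/2)) = fun x : ℝ => x * Real.exp (-(1/2) * x^2) from
    funext fun x => by rw [show -x^2/2 = -(1/2) * x^2 by ring]]
  exact integrable_mul_exp_neg_mul_sq (by norm_num)

lemma integrable_x2exp : Integrable (fun x : ℝ => x^2 * Real.exp (-x^2/2)) := by
  have h := integrable_rpow_mul_exp_neg_mul_sq (b := 1/2) (by norm_num) (s := 2) (by norm_num)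
  simp only [Real.rpow_two] at h
  rw [show (fun x : ℝ => x^2 * Real.exp (-x^2/2)) = fun x : ℝ => x^2 * Real.exp (-(1/2) * x^2) from
    funext fun x => by rw [show -x^2/2 = -(1/2) * x^2 by ring]]
  exact h

lemma tendsto_exp2_atTop : Filter.Tendsto (fun x : ℝ => Real.exp (-x^2/2)) Filter.atTop (nhds 0) := by
  have h : Filter.Tendsto (fun x : ℝ => -x^2/2) Filter.atTop Filter.atBot := by
    apply Filter.Tendsto.atBot_div_const (by norm_num : (0:ℝ) < 2)
    exact (Filter.tendsto_neg_atTop_atBot).comp (Filter.tendsto_pow_atTop (two_ne_zero))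
  exact Real.tendsto_exp_atBot.comp h

lemma tendsto_exp2_atBot : Filter.Tendsto (fun x : ℝ => Real.exp (-x^2/2)) Filter.atBot (nhds 0) := by
  have h := tendsto_exp2_atTop.comp Filter.tendsto_neg_atBot_atTop
  have : ((fun x : ℝ => Real.exp (-x^2/2)) ∘ fun x : ℝ => -x) = fun x : ℝ => Real.exp (-x^2/2) :=
    funext fun x => by simp only [Function.comp]; ring_nf
  rwa [this] at h

lemma tendsto_xexp2_atTop :
    Filter.Tendsto (fun x : ℝ => x * Real.exp (-x^2/2)) Filter.atTop (nhds 0) := by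
  have ho := rpow_mul_exp_neg_mul_sq_isLittleO_exp_neg (b := 1/2) (by norm_num) 1
  have hgz : Filter.Tendsto (fun x : ℝ => Real.exp (-(1/2) * x)) Filter.atTop (nhds 0) := by
    have h : Filter.Tendsto (fun x : ℝ => -(1/2) * x) Filter.atTop Filter.atBot := by
      rw [show (fun x : ℝ => -(1/2) * x) = fun x : ℝ => -(x/2) from funext fun x => by ring]
      exact Filter.tendsto_neg_atTop_atBot.comp (Filter.Tendsto.atTop_div_const (by norm_num) Filter.tendsto_id)
    exact Real.tendsto_exp_atBot.comp h
  have h0 := ho.tendsto_zero_of_tendsto hgz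
  refine h0.congr' ?_
  filter_upwards [Filter.eventually_ge_atTop (0:ℝ)] with x hx
  rw [Real.rpow_one, show -(1/2) * x^2 = -x^2/2 by ring]

lemma tendsto_xexp2_atBot :
    Filter.Tendsto (fun x : ℝ => x * Real.exp (-x^2/2)) Filter.atBot (nhds 0) := by
  have h := tendsto_xexp2_atTop.comp Filter.tendsto_neg_atBot_atTop
  have heq : ((fun x : ℝ => x * Real.exp (-x^2/2)) ∘ fun x : ℝ => -x)
      = fun x : ℝ => -(x * Real.exp (-x^2/2)) := funext fun x => by
    simp only [Function.comp]
    rw [show -(-x)^2/2 = -x^2/2 by ring]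
    ring
  rw [heq] at h
  have := h.neg
  simpa using this

lemma I0 : ∫ x : ℝ, Real.exp (-x^2/2) = Real.sqrt (2 * Real.pi) := by
  rw [expform, integral_gaussian]
  congr 1
  rw [div_div_eq_mul_div]
  ring

lemma I1 : ∫ x : ℝ, x * Real.exp (-x^2/2) = 0 := by
  have hF : ∀ x : ℝ, HasDerivAt (fun x : ℝ => -Real.exp (-x^2/2)) (x * Real.exp (-x^2/2)) x := by
    intro x
    have h1 : HasDerivAt (fun x : ℝ => -x^2/2) (-x) x := by
      have H := ((hasDerivAt_pow 2 x).neg).div_const 2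
      refine H.congr_deriv ?_
      simp
      ring
    have H := (h1.exp).neg
    refine H.congr_deriv ?_
    ring
  have := integral_of_hasDerivAt_of_tendsto hF integrable_xexp
    (tendsto_exp2_atBot.neg.congr (fun x => rfl)) (tendsto_exp2_atTop.neg.congr (fun x => rfl))
  simpa using this

lemma I2 : ∫ x : ℝ, x^2 * Real.exp (-x^2/2) = Real.sqrt (2 * Real.pi) := by
  have hF : ∀ x : ℝ, HasDerivAt (fun x : ℝ => -x * Real.exp (-x^2/2))
      (x^2 * Real.exp (-x^2/2) - Real.exp (-x^2/2)) x := by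
    intro x
    have h1 : HasDerivAt (fun x : ℝ => -x^2/2) (-x) x := by
      have H := ((hasDerivAt_pow 2 x).neg).div_const 2
      refine H.congr_deriv ?_
      simp
      ring
    have H := ((hasDerivAt_id x).neg).mul (h1.exp)
    refine H.congr_deriv ?_
    simp
    ring
  have hbot : Filter.Tendsto (fun x : ℝ => -x * Real.exp (-x^2/2)) Filter.atBot (nhds 0) := by
    have := tendsto_xexp2_atBot.neg
    simpa [neg_mul] using this
  have htop : Filter.Tendsto (fun x : ℝ => -x * Real.exp (-x^2/2)) Filter.atTop (nhds 0) := by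
    have := tendsto_xexp2_atTop.neg
    simpa [neg_mul] using this
  have hzero := integral_of_hasDerivAt_of_tendsto hF (integrable_x2exp.sub integrable_exp2) hbot htop
  rw [integral_sub integrable_x2exp integrable_exp2, I0] at hzero
  linarith

/-! ### Product structure of the Maxwellian -/

noncomputable def gm (x : ℝ) : ℝ := (2 * Real.pi) ^ (-(1:ℝ)/2) * Real.exp (-x^2/2)

lemma Maxw_eq (v : V) : Maxw v = gm v.1 * (gm v.2.1 * gm v.2.2) := by
  unfold Maxw gm
  rw [show (2 * Real.pi) ^ (-(3:ℝ)/2) = ((2 * Real.pi) ^ (-(1:ℝ)/2))^(3:ℕ) by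
    rw [← Real.rpow_natCast ((2 * Real.pi) ^ (-(1:ℝ)/2)) 3,
      ← Real.rpow_mul (by positivity : (0:ℝ) ≤ 2 * Real.pi)]
    norm_num]
  rw [show Real.exp (-(v.1^2 + v.2.1^2 + v.2.2^2)/2)
      = Real.exp (-v.1^2/2) * (Real.exp (-v.2.1^2/2) * Real.exp (-v.2.2^2/2)) by
    rw [← Real.exp_add, ← Real.exp_add]; congr 1; ring]
  ring

lemma integrable_gm : Integrable gm := by
  unfold gm
  exact integrable_exp2.const_mul _

lemma integrable_xgm : Integrable (fun x : ℝ => x * gm x) := by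
  have : (fun x : ℝ => x * gm x)
      = fun x : ℝ => (2 * Real.pi) ^ (-(1:ℝ)/2) * (x * Real.exp (-x^2/2)) :=
    funext fun x => by unfold gm; ring
  rw [this]
  exact integrable_xexp.const_mul _

lemma integrable_x2gm : Integrable (fun x : ℝ => x^2 * gm x) := by
  have : (fun x : ℝ => x^2 * gm x)
      = fun x : ℝ => (2 * Real.pi) ^ (-(1:ℝ)/2) * (x^2 * Real.exp (-x^2/2)) :=
    funext fun x => by unfold gm; ring
  rw [this]
  exact integrable_x2exp.const_mul _

lemma rpow_sqrt : (2 * Real.pi) ^ (-(1:ℝ)/2) * Real.sqrt (2 * Real.pi) = 1 := by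
  rw [Real.sqrt_eq_rpow, ← Real.rpow_add (by positivity : (0:ℝ) < 2 * Real.pi)]
  norm_num

lemma gm_I0 : ∫ x : ℝ, gm x = 1 := by
  unfold gm
  rw [MeasureTheory.integral_const_mul, I0, rpow_sqrt]

lemma gm_I1 : ∫ x : ℝ, x * gm x = 0 := by
  have : (fun x : ℝ => x * gm x)
      = fun x : ℝ => (2 * Real.pi) ^ (-(1:ℝ)/2) * (x * Real.exp (-x^2/2)) :=
    funext fun x => by unfold gm; ring
  rw [this, MeasureTheory.integral_const_mul, I1, mul_zero]

lemma gm_I2 : ∫ x : ℝ, x^2 * gm x = 1 := by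
  have : (fun x : ℝ => x^2 * gm x)
      = fun x : ℝ => (2 * Real.pi) ^ (-(1:ℝ)/2) * (x^2 * Real.exp (-x^2/2)) :=
    funext fun x => by unfold gm; ring
  rw [this, MeasureTheory.integral_const_mul, I2, rpow_sqrt]

lemma trip_int (p q r : ℝ → ℝ) (hp : Integrable p) (hq : Integrable q) (hr : Integrable r) :
    Integrable (fun v : V => p v.1 * (q v.2.1 * r v.2.2)) (volume : Measure V) := by
  have hqr : Integrable (fun y : ℝ × ℝ => q y.1 * r y.2) (volume : Measure (ℝ × ℝ)) := by
    rw [Measure.volume_eq_prod]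
    exact hq.mul_prod hr
  rw [Measure.volume_eq_prod]
  exact hp.mul_prod hqr

lemma trip_eq (p q r : ℝ → ℝ) :
    ∫ v : V, p v.1 * (q v.2.1 * r v.2.2)
      = (∫ x : ℝ, p x) * ((∫ x : ℝ, q x) * (∫ x : ℝ, r x)) := by
  rw [Measure.volume_eq_prod, integral_prod_mul p (fun y : ℝ × ℝ => q y.1 * r y.2)]
  congr 1
  rw [Measure.volume_eq_prod, integral_prod_mul]

/-! ### Second moments of the Maxwellian -/

lemma M11_int : Integrable (fun v : V => v.1 * (v.1 * Maxw v)) (volume : Measure V) := by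
  have h := trip_int (fun x : ℝ => x^2 * gm x) (fun x : ℝ => gm x) (fun x : ℝ => gm x) integrable_x2gm integrable_gm integrable_gm
  have he : (fun v : V => v.1 * (v.1 * Maxw v))
      = fun v : V => (fun x : ℝ => x^2 * gm x) v.1 * ((fun x : ℝ => gm x) v.2.1 * (fun x : ℝ => gm x) v.2.2) :=
    funext fun v => by rw [Maxw_eq]; ring
  rw [he]
  exact h

lemma M11_val : ∫ v : V, v.1 * (v.1 * Maxw v) = 1 := by
  have he : (fun v : V => v.1 * (v.1 * Maxw v))
      = fun v : V => (fun x : ℝ => x^2 * gm x) v.1 * ((fun x : ℝ => gm x) v.2.1 * (fun x : ℝ => gm x) v.2.2) :=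
    funext fun v => by rw [Maxw_eq]; ring
  rw [he, trip_eq (fun x : ℝ => x^2 * gm x) (fun x : ℝ => gm x) (fun x : ℝ => gm x)]
  simp only [gm_I0, gm_I1, gm_I2]
  norm_num

lemma M12_int : Integrable (fun v : V => v.1 * (v.2.1 * Maxw v)) (volume : Measure V) := by
  have h := trip_int (fun x : ℝ => x * gm x) (fun x : ℝ => x * gm x) (fun x : ℝ => gm x) integrable_xgm integrable_xgm integrable_gm
  have he : (fun v : V => v.1 * (v.2.1 * Maxw v))
      = fun v : V => (fun x : ℝ => x * gm x) v.1 * ((fun x : ℝ => x * gm x) v.2.1 * (fun x : ℝ => gm x) v.2.2) :=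
    funext fun v => by rw [Maxw_eq]; ring
  rw [he]
  exact h

lemma M12_val : ∫ v : V, v.1 * (v.2.1 * Maxw v) = 0 := by
  have he : (fun v : V => v.1 * (v.2.1 * Maxw v))
      = fun v : V => (fun x : ℝ => x * gm x) v.1 * ((fun x : ℝ => x * gm x) v.2.1 * (fun x : ℝ => gm x) v.2.2) :=
    funext fun v => by rw [Maxw_eq]; ring
  rw [he, trip_eq (fun x : ℝ => x * gm x) (fun x : ℝ => x * gm x) (fun x : ℝ => gm x)]
  simp only [gm_I0, gm_I1, gm_I2]
  norm_num

lemma M13_int : Integrable (fun v : V => v.1 * (v.2.2 * Maxw v)) (volume : Measure V) := by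
  have h := trip_int (fun x : ℝ => x * gm x) (fun x : ℝ => gm x) (fun x : ℝ => x * gm x) integrable_xgm integrable_gm integrable_xgm
  have he : (fun v : V => v.1 * (v.2.2 * Maxw v))
      = fun v : V => (fun x : ℝ => x * gm x) v.1 * ((fun x : ℝ => gm x) v.2.1 * (fun x : ℝ => x * gm x) v.2.2) :=
    funext fun v => by rw [Maxw_eq]; ring
  rw [he]
  exact h

lemma M13_val : ∫ v : V, v.1 * (v.2.2 * Maxw v) = 0 := by
  have he : (fun v : V => v.1 * (v.2.2 * Maxw v))
      = fun v : V => (fun x : ℝ => x * gm x) v.1 * ((fun x : ℝ => gm x) v.2.1 * (fun x : ℝ => x * gm x) v.2.2) :=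
    funext fun v => by rw [Maxw_eq]; ring
  rw [he, trip_eq (fun x : ℝ => x * gm x) (fun x : ℝ => gm x) (fun x : ℝ => x * gm x)]
  simp only [gm_I0, gm_I1, gm_I2]
  norm_num

lemma M21_int : Integrable (fun v : V => v.2.1 * (v.1 * Maxw v)) (volume : Measure V) := by
  have h := trip_int (fun x : ℝ => x * gm x) (fun x : ℝ => x * gm x) (fun x : ℝ => gm x) integrable_xgm integrable_xgm integrable_gm
  have he : (fun v : V => v.2.1 * (v.1 * Maxw v))
      = fun v : V => (fun x : ℝ => x * gm x) v.1 * ((fun x : ℝ => x * gm x) v.2.1 * (fun x : ℝ => gm x) v.2.2) :=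
    funext fun v => by rw [Maxw_eq]; ring
  rw [he]
  exact h

lemma M21_val : ∫ v : V, v.2.1 * (v.1 * Maxw v) = 0 := by
  have he : (fun v : V => v.2.1 * (v.1 * Maxw v))
      = fun v : V => (fun x : ℝ => x * gm x) v.1 * ((fun x : ℝ => x * gm x) v.2.1 * (fun x : ℝ => gm x) v.2.2) :=
    funext fun v => by rw [Maxw_eq]; ring
  rw [he, trip_eq (fun x : ℝ => x * gm x) (fun x : ℝ => x * gm x) (fun x : ℝ => gm x)]
  simp only [gm_I0, gm_I1, gm_I2]
  norm_num

lemma M22_int : Integrable (fun v : V => v.2.1 * (v.2.1 * Maxw v)) (volume : Measure V) := by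
  have h := trip_int (fun x : ℝ => gm x) (fun x : ℝ => x^2 * gm x) (fun x : ℝ => gm x) integrable_gm integrable_x2gm integrable_gm
  have he : (fun v : V => v.2.1 * (v.2.1 * Maxw v))
      = fun v : V => (fun x : ℝ => gm x) v.1 * ((fun x : ℝ => x^2 * gm x) v.2.1 * (fun x : ℝ => gm x) v.2.2) :=
    funext fun v => by rw [Maxw_eq]; ring
  rw [he]
  exact h

lemma M22_val : ∫ v : V, v.2.1 * (v.2.1 * Maxw v) = 1 := by
  have he : (fun v : V => v.2.1 * (v.2.1 * Maxw v))
      = fun v : V => (fun x : ℝ => gm x) v.1 * ((fun x : ℝ => x^2 * gm x) v.2.1 * (fun x : ℝ => gm x) v.2.2) :=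
    funext fun v => by rw [Maxw_eq]; ring
  rw [he, trip_eq (fun x : ℝ => gm x) (fun x : ℝ => x^2 * gm x) (fun x : ℝ => gm x)]
  simp only [gm_I0, gm_I1, gm_I2]
  norm_num

lemma M23_int : Integrable (fun v : V => v.2.1 * (v.2.2 * Maxw v)) (volume : Measure V) := by
  have h := trip_int (fun x : ℝ => gm x) (fun x : ℝ => x * gm x) (fun x : ℝ => x * gm x) integrable_gm integrable_xgm integrable_xgm
  have he : (fun v : V => v.2.1 * (v.2.2 * Maxw v))
      = fun v : V => (fun x : ℝ => gm x) v.1 * ((fun x : ℝ => x * gm x) v.2.1 * (fun x : ℝ => x * gm x) v.2.2) :=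
    funext fun v => by rw [Maxw_eq]; ring
  rw [he]
  exact h

lemma M23_val : ∫ v : V, v.2.1 * (v.2.2 * Maxw v) = 0 := by
  have he : (fun v : V => v.2.1 * (v.2.2 * Maxw v))
      = fun v : V => (fun x : ℝ => gm x) v.1 * ((fun x : ℝ => x * gm x) v.2.1 * (fun x : ℝ => x * gm x) v.2.2) :=
    funext fun v => by rw [Maxw_eq]; ring
  rw [he, trip_eq (fun x : ℝ => gm x) (fun x : ℝ => x * gm x) (fun x : ℝ => x * gm x)]
  simp only [gm_I0, gm_I1, gm_I2]
  norm_num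

lemma M31_int : Integrable (fun v : V => v.2.2 * (v.1 * Maxw v)) (volume : Measure V) := by
  have h := trip_int (fun x : ℝ => x * gm x) (fun x : ℝ => gm x) (fun x : ℝ => x * gm x) integrable_xgm integrable_gm integrable_xgm
  have he : (fun v : V => v.2.2 * (v.1 * Maxw v))
      = fun v : V => (fun x : ℝ => x * gm x) v.1 * ((fun x : ℝ => gm x) v.2.1 * (fun x : ℝ => x * gm x) v.2.2) :=
    funext fun v => by rw [Maxw_eq]; ring
  rw [he]
  exact h

lemma M31_val : ∫ v : V, v.2.2 * (v.1 * Maxw v) = 0 := by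
  have he : (fun v : V => v.2.2 * (v.1 * Maxw v))
      = fun v : V => (fun x : ℝ => x * gm x) v.1 * ((fun x : ℝ => gm x) v.2.1 * (fun x : ℝ => x * gm x) v.2.2) :=
    funext fun v => by rw [Maxw_eq]; ring
  rw [he, trip_eq (fun x : ℝ => x * gm x) (fun x : ℝ => gm x) (fun x : ℝ => x * gm x)]
  simp only [gm_I0, gm_I1, gm_I2]
  norm_num

lemma M32_int : Integrable (fun v : V => v.2.2 * (v.2.1 * Maxw v)) (volume : Measure V) := by
  have h := trip_int (fun x : ℝ => gm x) (fun x : ℝ => x * gm x) (fun x : ℝ => x * gm x) integrable_gm integrable_xgm integrable_xgm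
  have he : (fun v : V => v.2.2 * (v.2.1 * Maxw v))
      = fun v : V => (fun x : ℝ => gm x) v.1 * ((fun x : ℝ => x * gm x) v.2.1 * (fun x : ℝ => x * gm x) v.2.2) :=
    funext fun v => by rw [Maxw_eq]; ring
  rw [he]
  exact h

lemma M32_val : ∫ v : V, v.2.2 * (v.2.1 * Maxw v) = 0 := by
  have he : (fun v : V => v.2.2 * (v.2.1 * Maxw v))
      = fun v : V => (fun x : ℝ => gm x) v.1 * ((fun x : ℝ => x * gm x) v.2.1 * (fun x : ℝ => x * gm x) v.2.2) :=
    funext fun v => by rw [Maxw_eq]; ring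
  rw [he, trip_eq (fun x : ℝ => gm x) (fun x : ℝ => x * gm x) (fun x : ℝ => x * gm x)]
  simp only [gm_I0, gm_I1, gm_I2]
  norm_num

lemma M33_int : Integrable (fun v : V => v.2.2 * (v.2.2 * Maxw v)) (volume : Measure V) := by
  have h := trip_int (fun x : ℝ => gm x) (fun x : ℝ => gm x) (fun x : ℝ => x^2 * gm x) integrable_gm integrable_gm integrable_x2gm
  have he : (fun v : V => v.2.2 * (v.2.2 * Maxw v))
      = fun v : V => (fun x : ℝ => gm x) v.1 * ((fun x : ℝ => gm x) v.2.1 * (fun x : ℝ => x^2 * gm x) v.2.2) :=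
    funext fun v => by rw [Maxw_eq]; ring
  rw [he]
  exact h

lemma M33_val : ∫ v : V, v.2.2 * (v.2.2 * Maxw v) = 1 := by
  have he : (fun v : V => v.2.2 * (v.2.2 * Maxw v))
      = fun v : V => (fun x : ℝ => gm x) v.1 * ((fun x : ℝ => gm x) v.2.1 * (fun x : ℝ => x^2 * gm x) v.2.2) :=
    funext fun v => by rw [Maxw_eq]; ring
  rw [he, trip_eq (fun x : ℝ => gm x) (fun x : ℝ => gm x) (fun x : ℝ => x^2 * gm x)]
  simp only [gm_I0, gm_I1, gm_I2]
  norm_num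


lemma char (X : V → ℝ) (hX : ContDiff ℝ 1 X) (c : ℝ) (hc : c ≠ 0) (a b d : ℝ)
    (hgy : ∀ v : V, gyro X v - (a * (v.2.1 * Maxw v) - b * (v.1 * Maxw v))
      = c * (X v - (a * (v.1 * Maxw v) + b * (v.2.1 * Maxw v) + d * (v.2.2 * Maxw v)))) :
    ∀ v : V, X v = a * (v.1 * Maxw v) + b * (v.2.1 * Maxw v) + d * (v.2.2 * Maxw v) := by
  have hXd : Differentiable ℝ X := hX.differentiable one_ne_zero
  have hdiff : Differentiable ℝ
      (fun w : V => X w - (a * (w.1 * Maxw w) + b * (w.2.1 * Maxw w) + d * (w.2.2 * Maxw w))) := by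
    intro w
    exact ((hXd w).sub
      (((((hasFDerivAt_P1 w).const_mul a).add ((hasFDerivAt_P2 w).const_mul b)).add
        ((hasFDerivAt_P3 w).const_mul d)).differentiableAt))
  have hv := vanish hc hdiff (fun w => by rw [gyro_combo X hXd a b d w]; exact hgy w)
  intro v
  have := hv v
  linarith [this]

end RelaxAux

open RelaxAux in
/-- in the relaxation-time case `σ = 1/τ`, the solution
`X^η = (X₁, X₂, X₃)` of `-Q^η(X^η) = (v_⊥/η², v_z) M`, `∫ X^η dv = 0`,
gives the explicit diffusion matrix
`D^η = τ·[[η²/(τ²+η⁴), τ/(τ²+η⁴), 0],[-τ/(τ²+η⁴), η²/(τ²+η⁴), 0],[0,0,1]]`;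
in particular `X₃ = τ v_z M` and `∫ v_z X₃ dv = τ`. -/
theorem relaxation_diffusion_matrix (τ η : ℝ) (hτ : 0 < τ) (hη : 0 < η)
    (X₁ X₂ X₃ : V → ℝ)
    (hC : ContDiff ℝ 1 X₁ ∧ ContDiff ℝ 1 X₂ ∧ ContDiff ℝ 1 X₃)
    (hint : Integrable X₁ (volume : Measure V) ∧ Integrable X₂ (volume : Measure V) ∧
            Integrable X₃ (volume : Measure V))
    (hmom : ∀ i : Fin 3, Integrable
      (fun v : V => (![v.1, v.2.1, v.2.2] i) * X₁ v) (volume : Measure V) ∧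
      Integrable (fun v : V => (![v.1, v.2.1, v.2.2] i) * X₂ v) (volume : Measure V) ∧
      Integrable (fun v : V => (![v.1, v.2.1, v.2.2] i) * X₃ v) (volume : Measure V))
    (heq₁ : ∀ v : V, -Qηrel τ η X₁ v = (v.1 / η^2) * Maxw v)
    (heq₂ : ∀ v : V, -Qηrel τ η X₂ v = (v.2.1 / η^2) * Maxw v)
    (heq₃ : ∀ v : V, -Qηrel τ η X₃ v = v.2.2 * Maxw v)
    (hz : (∫ v : V, X₁ v) = 0 ∧ (∫ v : V, X₂ v) = 0 ∧ (∫ v : V, X₃ v) = 0) :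
    (∀ v : V, X₃ v = τ * (v.2.2 * Maxw v)) ∧
    (∫ v : V, v.2.2 * X₃ v) = τ ∧
    (!![∫ v : V, (v.1/η) * (η * X₁ v), ∫ v : V, (v.1/η) * (η * X₂ v),
          ∫ v : V, (v.1/η) * X₃ v;
        ∫ v : V, (v.2.1/η) * (η * X₁ v), ∫ v : V, (v.2.1/η) * (η * X₂ v),
          ∫ v : V, (v.2.1/η) * X₃ v;
        ∫ v : V, v.2.2 * (η * X₁ v), ∫ v : V, v.2.2 * (η * X₂ v),
          ∫ v : V, v.2.2 * X₃ v] : Matrix (Fin 3) (Fin 3) ℝ) =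
      τ • !![η^2/(τ^2+η^4), τ/(τ^2+η^4), 0;
             -τ/(τ^2+η^4), η^2/(τ^2+η^4), 0;
             0, 0, 1] := by
  obtain ⟨hC1, hC2, hC3⟩ := hC
  obtain ⟨hz1, hz2, hz3⟩ := hz
  have hτ' : τ ≠ 0 := hτ.ne'
  have hη' : η ≠ 0 := hη.ne'
  have hS : (0:ℝ) < τ^2 + η^4 := by positivity
  have hS' : τ^2 + η^4 ≠ 0 := hS.ne'
  have hc : -(η^2/τ) ≠ 0 := by
    have h1 : 0 < η^2/τ := by positivity
    exact neg_ne_zero.mpr (ne_of_gt h1)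
  -- X₃ characterization
  have hgy3 : ∀ v : V, gyro X₃ v - ((0:ℝ) * (v.2.1 * Maxw v) - (0:ℝ) * (v.1 * Maxw v))
      = -(η^2/τ) * (X₃ v - ((0:ℝ) * (v.1 * Maxw v) + (0:ℝ) * (v.2.1 * Maxw v)
          + τ * (v.2.2 * Maxw v))) := by
    intro v
    have h := heq₃ v
    simp only [Qηrel, Qrel] at h
    rw [hz3] at h
    field_simp at h ⊢
    linarith
  have hX3 := char X₃ hC3 _ hc 0 0 τ hgy3
  have hX3' : ∀ v : V, X₃ v = τ * (v.2.2 * Maxw v) := fun v => by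
    have := hX3 v; linarith
  -- X₁ characterization
  have hgy1 : ∀ v : V, gyro X₁ v - ((τ*η^2/(τ^2+η^4)) * (v.2.1 * Maxw v)
        - (-(τ^2/(τ^2+η^4))) * (v.1 * Maxw v))
      = -(η^2/τ) * (X₁ v - ((τ*η^2/(τ^2+η^4)) * (v.1 * Maxw v)
          + (-(τ^2/(τ^2+η^4))) * (v.2.1 * Maxw v) + 0 * (v.2.2 * Maxw v))) := by
    intro v
    have h := heq₁ v
    simp only [Qηrel, Qrel] at h
    rw [hz1] at h
    field_simp at h ⊢
    have h' : τ * gyro X₁ v + X₁ v * η^2 = v.1 * Maxw v * τ := by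
      apply mul_right_cancel₀ (pow_ne_zero 2 hη')
      linear_combination η^2 * h
    linear_combination (τ^2+η^4) * h' 
  have hX1 := char X₁ hC1 _ hc (τ*η^2/(τ^2+η^4)) (-(τ^2/(τ^2+η^4))) 0 hgy1
  -- X₂ characterization
  have hgy2 : ∀ v : V, gyro X₂ v - ((τ^2/(τ^2+η^4)) * (v.2.1 * Maxw v)
        - (τ*η^2/(τ^2+η^4)) * (v.1 * Maxw v))
      = -(η^2/τ) * (X₂ v - ((τ^2/(τ^2+η^4)) * (v.1 * Maxw v)
          + (τ*η^2/(τ^2+η^4)) * (v.2.1 * Maxw v) + 0 * (v.2.2 * Maxw v))) := by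
    intro v
    have h := heq₂ v
    simp only [Qηrel, Qrel] at h
    rw [hz2] at h
    field_simp at h ⊢
    have h' : τ * gyro X₂ v + X₂ v * η^2 = v.2.1 * Maxw v * τ := by
      apply mul_right_cancel₀ (pow_ne_zero 2 hη')
      linear_combination η^2 * h
    linear_combination (τ^2+η^4) * h' 
  have hX2 := char X₂ hC2 _ hc (τ^2/(τ^2+η^4)) (τ*η^2/(τ^2+η^4)) 0 hgy2
  have E11 : ∫ v : V, (v.1/η) * (η * X₁ v) = (τ*η^2/(τ^2+η^4)) := by
    rw [show (fun v : V => (v.1/η) * (η * X₁ v))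
        = fun v : V => (τ*η^2/(τ^2+η^4)) * (v.1 * (v.1 * Maxw v)) + (-(τ^2/(τ^2+η^4))) * (v.1 * (v.2.1 * Maxw v)) from
      funext fun v => by rw [hX1 v]; field_simp; ring]
    rw [integral_add ((M11_int).const_mul _) ((M12_int).const_mul _),
      MeasureTheory.integral_const_mul, MeasureTheory.integral_const_mul,
      M11_val, M12_val]
    ring
  have E12 : ∫ v : V, (v.1/η) * (η * X₂ v) = (τ^2/(τ^2+η^4)) := by
    rw [show (fun v : V => (v.1/η) * (η * X₂ v))
        = fun v : V => (τ^2/(τ^2+η^4)) * (v.1 * (v.1 * Maxw v)) + (τ*η^2/(τ^2+η^4)) * (v.1 * (v.2.1 * Maxw v)) from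
      funext fun v => by rw [hX2 v]; field_simp; ring]
    rw [integral_add ((M11_int).const_mul _) ((M12_int).const_mul _),
      MeasureTheory.integral_const_mul, MeasureTheory.integral_const_mul,
      M11_val, M12_val]
    ring
  have E13 : ∫ v : V, (v.1/η) * X₃ v = (0:ℝ) := by
    rw [show (fun v : V => (v.1/η) * X₃ v) = fun v : V => (τ/η) * (v.1 * (v.2.2 * Maxw v)) from
      funext fun v => by rw [hX3' v]; ring]
    rw [MeasureTheory.integral_const_mul, M13_val]
    ring
  have E21 : ∫ v : V, (v.2.1/η) * (η * X₁ v) = (-(τ^2/(τ^2+η^4))) := by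
    rw [show (fun v : V => (v.2.1/η) * (η * X₁ v))
        = fun v : V => (τ*η^2/(τ^2+η^4)) * (v.2.1 * (v.1 * Maxw v)) + (-(τ^2/(τ^2+η^4))) * (v.2.1 * (v.2.1 * Maxw v)) from
      funext fun v => by rw [hX1 v]; field_simp; ring]
    rw [integral_add ((M21_int).const_mul _) ((M22_int).const_mul _),
      MeasureTheory.integral_const_mul, MeasureTheory.integral_const_mul,
      M21_val, M22_val]
    ring
  have E22 : ∫ v : V, (v.2.1/η) * (η * X₂ v) = (τ*η^2/(τ^2+η^4)) := by
    rw [show (fun v : V => (v.2.1/η) * (η * X₂ v))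
        = fun v : V => (τ^2/(τ^2+η^4)) * (v.2.1 * (v.1 * Maxw v)) + (τ*η^2/(τ^2+η^4)) * (v.2.1 * (v.2.1 * Maxw v)) from
      funext fun v => by rw [hX2 v]; field_simp; ring]
    rw [integral_add ((M21_int).const_mul _) ((M22_int).const_mul _),
      MeasureTheory.integral_const_mul, MeasureTheory.integral_const_mul,
      M21_val, M22_val]
    ring
  have E23 : ∫ v : V, (v.2.1/η) * X₃ v = (0:ℝ) := by
    rw [show (fun v : V => (v.2.1/η) * X₃ v) = fun v : V => (τ/η) * (v.2.1 * (v.2.2 * Maxw v)) from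
      funext fun v => by rw [hX3' v]; ring]
    rw [MeasureTheory.integral_const_mul, M23_val]
    ring
  have E31 : ∫ v : V, v.2.2 * (η * X₁ v) = (0:ℝ) := by
    rw [show (fun v : V => v.2.2 * (η * X₁ v))
        = fun v : V => ((τ*η^2/(τ^2+η^4))*η) * (v.2.2 * (v.1 * Maxw v)) + ((-(τ^2/(τ^2+η^4)))*η) * (v.2.2 * (v.2.1 * Maxw v)) from
      funext fun v => by rw [hX1 v]; ring]
    rw [integral_add ((M31_int).const_mul _) ((M32_int).const_mul _),
      MeasureTheory.integral_const_mul, MeasureTheory.integral_const_mul,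
      M31_val, M32_val]
    ring
  have E32 : ∫ v : V, v.2.2 * (η * X₂ v) = (0:ℝ) := by
    rw [show (fun v : V => v.2.2 * (η * X₂ v))
        = fun v : V => ((τ^2/(τ^2+η^4))*η) * (v.2.2 * (v.1 * Maxw v)) + ((τ*η^2/(τ^2+η^4))*η) * (v.2.2 * (v.2.1 * Maxw v)) from
      funext fun v => by rw [hX2 v]; ring]
    rw [integral_add ((M31_int).const_mul _) ((M32_int).const_mul _),
      MeasureTheory.integral_const_mul, MeasureTheory.integral_const_mul,
      M31_val, M32_val]
    ring
  have E33 : ∫ v : V, v.2.2 * X₃ v = τ := by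
    rw [show (fun v : V => v.2.2 * X₃ v) = fun v : V => τ * (v.2.2 * (v.2.2 * Maxw v)) from
      funext fun v => by rw [hX3' v]; ring]
    rw [MeasureTheory.integral_const_mul, M33_val]
    ring
  refine ⟨hX3', E33, ?_⟩
  ext i j
  fin_cases i <;> fin_cases j <;>
    simp [Matrix.smul_apply, smul_eq_mul, Fin.zero_eta, Fin.mk_one,
      Matrix.cons_val_two, Matrix.tail_cons, E11, E12, E13, E21, E22, E23,
      E31, E32, E33] <;>
    first
      | ring
      | (field_simp; ring)
end

section
/- Let g ∈ L²_M be continuous with zero cylindrical average A(g) = 0, and let ν be continuous with α₁ ≤ ν ≤ α₂. Define A₁(g)(v) = (1/(2π ν̄(v))) ∫₀^{2π} g(R(τ)v) ∫₀^τ ν(R(s)v) ds dτ, where ν̄(v) = (1/2π)∫₀^{2π}ν(R(s)v)ds. Then the cylindrical average of ν·A₁(g) vanishes: A(ν A₁(g)) = 0. -/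
open MeasureTheory Real

/-- `ν̄(v) = (1/2π) ∫₀^{2π} ν(R(s)v) ds`. -/
noncomputable def nuBar (ν : V → ℝ) (v : V) : ℝ :=
  (1/(2*Real.pi)) * ∫ s in (0:ℝ)..(2*Real.pi), ν (Rot s v)

/-- The averaging operator
`A₁(g)(v) = (1/(2π ν̄(v))) ∫₀^{2π} g(R(τ)v) (∫₀^τ ν(R(s)v) ds) dτ`. -/
noncomputable def avgA1 (ν : V → ℝ) (g : V → ℝ) (v : V) : ℝ :=
  (1/(2*Real.pi * nuBar ν v)) *
    ∫ τ in (0:ℝ)..(2*Real.pi), g (Rot τ v) * ∫ s in (0:ℝ)..τ, ν (Rot s v)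

lemma Rot_Rot (a b : ℝ) (v : V) : Rot a (Rot b v) = Rot (a + b) v := by
  simp only [Rot, Real.cos_add, Real.sin_add, Prod.mk.injEq]
  refine ⟨by ring, by ring, trivial⟩

lemma Rot_add_two_pi (τ : ℝ) (v : V) : Rot (τ + 2 * Real.pi) v = Rot τ v := by
  simp [Rot, Real.cos_add_two_pi, Real.sin_add_two_pi]

lemma continuous_Rot (v : V) : Continuous (fun τ => Rot τ v) := by
  unfold Rot; fun_prop

/-- The key abstract one-dimensional computation. -/
lemma key_aux (f n : ℝ → ℝ) (hf : Continuous f) (hn : Continuous n)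
    (hfp : Function.Periodic f (2 * Real.pi)) (hnp : Function.Periodic n (2 * Real.pi))
    (hf0 : ∀ θ : ℝ, (∫ τ in θ..θ + 2 * Real.pi, f τ) = 0) :
    (∫ θ in (0:ℝ)..2 * Real.pi,
      n θ * ∫ τ in (0:ℝ)..2 * Real.pi, f (τ + θ) * ∫ s in (0:ℝ)..τ, n (s + θ)) = 0 := by
  set N : ℝ → ℝ := fun τ => ∫ s in (0:ℝ)..τ, n s with hNdef
  set F : ℝ → ℝ := fun τ => ∫ s in (0:ℝ)..τ, f s with hFdef
  have hNd : ∀ x : ℝ, HasDerivAt N (n x) x := fun x =>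
    intervalIntegral.integral_hasDerivAt_right (hn.intervalIntegrable _ _)
      (hn.stronglyMeasurableAtFilter _ _) hn.continuousAt
  have hFd : ∀ x : ℝ, HasDerivAt F (f x) x := fun x =>
    intervalIntegral.integral_hasDerivAt_right (hf.intervalIntegrable _ _)
      (hf.stronglyMeasurableAtFilter _ _) hf.continuousAt
  have hNc : Continuous N := continuous_iff_continuousAt.2 fun x => (hNd x).continuousAt
  have hFc : Continuous F := continuous_iff_continuousAt.2 fun x => (hFd x).continuousAt
  set c : ℝ := N (2 * Real.pi) with hc
  -- N is "periodic up to c"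
  have hNadd : ∀ u : ℝ, N (u + 2 * Real.pi) = N u + c := by
    intro u
    have h1 : (∫ s in (0:ℝ)..u, n s) + ∫ s in u..u + 2 * Real.pi, n s
        = ∫ s in (0:ℝ)..u + 2 * Real.pi, n s :=
      intervalIntegral.integral_add_adjacent_intervals (hn.intervalIntegrable _ _)
        (hn.intervalIntegrable _ _)
    have h2 : (∫ s in u..u + 2 * Real.pi, n s) = ∫ s in (0:ℝ)..(0:ℝ) + 2 * Real.pi, n s :=
      hnp.intervalIntegral_add_eq u 0
    rw [zero_add] at h2
    have : c = ∫ s in (0:ℝ)..2 * Real.pi, n s := rfl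
    simp only [hNdef]
    rw [← h1, h2, ← this]
  -- rewrite the inner double integral
  set φ : ℝ → ℝ := fun θ => ∫ u in θ..θ + 2 * Real.pi, f u * N u with hφdef
  have hinner : ∀ θ : ℝ,
      (∫ τ in (0:ℝ)..2 * Real.pi, f (τ + θ) * ∫ s in (0:ℝ)..τ, n (s + θ)) = φ θ := by
    intro θ
    have hs : ∀ τ : ℝ, (∫ s in (0:ℝ)..τ, n (s + θ)) = N (τ + θ) - N θ := by
      intro τ
      rw [intervalIntegral.integral_comp_add_right (fun s => n s) θ, zero_add]
      exact (intervalIntegral.integral_interval_sub_left (hn.intervalIntegrable _ _)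
        (hn.intervalIntegrable _ _)).symm
    have h1 : (∫ τ in (0:ℝ)..2 * Real.pi, f (τ + θ) * ∫ s in (0:ℝ)..τ, n (s + θ))
        = ∫ τ in (0:ℝ)..2 * Real.pi, f (τ + θ) * (N (τ + θ) - N θ) := by
      refine intervalIntegral.integral_congr fun τ _ => ?_
      rw [hs]
    rw [h1, intervalIntegral.integral_comp_add_right (fun u => f u * (N u - N θ)) θ, zero_add,
      add_comm (2 * Real.pi) θ]
    have h2 : (∫ u in θ..θ + 2 * Real.pi, f u * (N u - N θ))
        = (∫ u in θ..θ + 2 * Real.pi, f u * N u) - N θ * ∫ u in θ..θ + 2 * Real.pi, f u := by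
      rw [← intervalIntegral.integral_const_mul, ← intervalIntegral.integral_sub
        (f := fun u => f u * N u) (g := fun u => N θ * f u) ((hf.mul hNc).intervalIntegrable _ _) ((continuous_const.mul hf).intervalIntegrable _ _)]
      refine intervalIntegral.integral_congr fun u _ => ?_
      ring
    rw [h2, hf0 θ, mul_zero, sub_zero]
  -- φ θ = φ 0 + c * F θ
  have hφ : ∀ θ : ℝ, φ θ = φ 0 + c * F θ := by
    intro θ
    have hint : ∀ a b : ℝ, IntervalIntegrable (fun u => f u * N u) volume a b :=
      fun a b => (hf.mul hNc).intervalIntegrable a b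
    have h1 : (∫ u in (0:ℝ)..θ, f u * N u) + ∫ u in θ..θ + 2 * Real.pi, f u * N u
        = ∫ u in (0:ℝ)..θ + 2 * Real.pi, f u * N u :=
      intervalIntegral.integral_add_adjacent_intervals (hint _ _) (hint _ _)
    have h2 : (∫ u in (0:ℝ)..2 * Real.pi, f u * N u)
        + ∫ u in 2 * Real.pi..θ + 2 * Real.pi, f u * N u
        = ∫ u in (0:ℝ)..θ + 2 * Real.pi, f u * N u :=
      intervalIntegral.integral_add_adjacent_intervals (hint _ _) (hint _ _)
    have h3 : (∫ u in 2 * Real.pi..θ + 2 * Real.pi, f u * N u)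
        = ∫ u in (0:ℝ)..θ, f (u + 2 * Real.pi) * N (u + 2 * Real.pi) := by
      rw [intervalIntegral.integral_comp_add_right (fun u => f u * N u) (2 * Real.pi), zero_add]
    have h4 : (∫ u in (0:ℝ)..θ, f (u + 2 * Real.pi) * N (u + 2 * Real.pi))
        = (∫ u in (0:ℝ)..θ, f u * N u) + c * F θ := by
      have : ∀ u : ℝ, f (u + 2 * Real.pi) * N (u + 2 * Real.pi) = f u * N u + c * f u := by
        intro u
        rw [hfp u, hNadd u]
        ring
      rw [intervalIntegral.integral_congr (g := fun u => f u * N u + c * f u)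
        (fun u _ => this u), intervalIntegral.integral_add (g := fun u => c * f u) (hint _ _)
        ((continuous_const.mul hf).intervalIntegrable _ _),
        intervalIntegral.integral_const_mul]
    have hφ0 : φ 0 = ∫ u in (0:ℝ)..2 * Real.pi, f u * N u := by
      simp only [hφdef, zero_add]
    simp only [hφdef] at h1 ⊢
    rw [zero_add]
    rw [h3, h4] at h2
    linarith
  -- integration by parts : ∫ (f N + F n) over a period = 0
  have hF2π : F (2 * Real.pi) = 0 := by
    have := hf0 0
    rw [zero_add] at this
    simpa [hFdef] using this
  have hparts : (∫ u in (0:ℝ)..2 * Real.pi, f u * N u + F u * n u)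
      = F (2 * Real.pi) * N (2 * Real.pi) - F 0 * N 0 :=
    intervalIntegral.integral_deriv_mul_eq_sub (fun x _ => hFd x) (fun x _ => hNd x)
      (hf.intervalIntegrable _ _) (hn.intervalIntegrable _ _)
  have hF0 : F 0 = 0 := intervalIntegral.integral_same
  rw [hF2π, hF0, zero_mul, zero_mul, sub_zero] at hparts
  have hsplit : (∫ u in (0:ℝ)..2 * Real.pi, f u * N u)
      + ∫ u in (0:ℝ)..2 * Real.pi, F u * n u = 0 := by
    rw [← intervalIntegral.integral_add (f := fun u => f u * N u) (g := fun u => F u * n u)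
      ((hf.mul hNc).intervalIntegrable _ _)
      ((hFc.mul hn).intervalIntegrable _ _)]
    exact hparts
  -- put everything together
  have hmain : (∫ θ in (0:ℝ)..2 * Real.pi,
      n θ * ∫ τ in (0:ℝ)..2 * Real.pi, f (τ + θ) * ∫ s in (0:ℝ)..τ, n (s + θ))
      = ∫ θ in (0:ℝ)..2 * Real.pi, (φ 0 * n θ + c * (F θ * n θ)) := by
    refine intervalIntegral.integral_congr fun θ _ => ?_
    rw [hinner θ, hφ θ]
    ring
  rw [hmain, intervalIntegral.integral_add (f := fun θ => φ 0 * n θ) (g := fun θ => c * (F θ * n θ))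
      ((continuous_const.mul hn).intervalIntegrable _ _)
      ((continuous_const.mul (hFc.mul hn)).intervalIntegrable _ _),
    intervalIntegral.integral_const_mul, intervalIntegral.integral_const_mul]
  have hcn : (∫ θ in (0:ℝ)..2 * Real.pi, n θ) = c := rfl
  have hφ0' : φ 0 = ∫ u in (0:ℝ)..2 * Real.pi, f u * N u := by
    simp only [hφdef, zero_add]
  rw [hcn, hφ0']
  have : (∫ u in (0:ℝ)..2 * Real.pi, F u * n u)
      = -(∫ u in (0:ℝ)..2 * Real.pi, f u * N u) := by linarith
  rw [this]
  ring

/-- if `A(g) = 0`, then `A(ν·A₁(g)) = 0`. -/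
theorem cylAvg_nu_avgA1 (ν g : V → ℝ) (α₁ α₂ : ℝ) (hα₁ : 0 < α₁)
    (hν : Continuous ν) (hνbound : ∀ v : V, α₁ ≤ ν v ∧ ν v ≤ α₂)
    (hg : Continuous g)
    (hgL2 : Integrable (fun v => (g v)^2 / Maxw v) (volume : Measure V))
    (hgavg : ∀ v : V, cylAvg g v = 0) :
    ∀ v : V, cylAvg (fun w => ν w * avgA1 ν g w) v = 0 := by
  intro v
  set f : ℝ → ℝ := fun θ => g (Rot θ v) with hfdef
  set n : ℝ → ℝ := fun θ => ν (Rot θ v) with hndef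
  have hfc : Continuous f := hg.comp (continuous_Rot v)
  have hnc : Continuous n := hν.comp (continuous_Rot v)
  have hfp : Function.Periodic f (2 * Real.pi) := fun θ => by
    simp only [hfdef, Rot_add_two_pi]
  have hnp : Function.Periodic n (2 * Real.pi) := fun θ => by
    simp only [hndef, Rot_add_two_pi]
  have hf0 : ∀ θ : ℝ, (∫ τ in θ..θ + 2 * Real.pi, f τ) = 0 := by
    intro θ
    have h1 : (∫ τ in (0:ℝ)..2 * Real.pi, g (Rot τ (Rot θ v))) = 0 := by
      have := hgavg (Rot θ v)
      unfold cylAvg at this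
      have hπ : (1 / (2 * Real.pi)) ≠ 0 := by positivity
      exact (mul_eq_zero.1 this).resolve_left hπ
    have h2 : (∫ τ in (0:ℝ)..2 * Real.pi, f (τ + θ)) = ∫ τ in θ..θ + 2 * Real.pi, f τ := by
      rw [intervalIntegral.integral_comp_add_right f θ, zero_add, add_comm (2 * Real.pi) θ]
    calc (∫ τ in θ..θ + 2 * Real.pi, f τ)
        = ∫ τ in (0:ℝ)..2 * Real.pi, f (τ + θ) := h2.symm
      _ = ∫ τ in (0:ℝ)..2 * Real.pi, g (Rot τ (Rot θ v)) := by
          refine intervalIntegral.integral_congr fun τ _ => ?_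
          simp only [hfdef]
          rw [Rot_Rot]
      _ = 0 := h1
  -- nuBar is rotation invariant
  have hnuBar : ∀ θ : ℝ, nuBar ν (Rot θ v) = nuBar ν v := by
    intro θ
    unfold nuBar
    congr 1
    have h1 : (∫ s in (0:ℝ)..2 * Real.pi, ν (Rot s (Rot θ v)))
        = ∫ s in (0:ℝ)..2 * Real.pi, n (s + θ) := by
      refine intervalIntegral.integral_congr fun s _ => ?_
      simp only [hndef]
      rw [Rot_Rot]
    rw [h1, intervalIntegral.integral_comp_add_right n θ, zero_add,
      add_comm (2 * Real.pi) θ, hnp.intervalIntegral_add_eq θ 0, zero_add]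
  unfold cylAvg
  have hkey := key_aux f n hfc hnc hfp hnp hf0
  have hmain : (∫ θ in (0:ℝ)..2 * Real.pi,
      (fun w => ν w * avgA1 ν g w) (Rot θ v))
      = (1 / (2 * Real.pi * nuBar ν v)) *
        ∫ θ in (0:ℝ)..2 * Real.pi,
          n θ * ∫ τ in (0:ℝ)..2 * Real.pi, f (τ + θ) * ∫ s in (0:ℝ)..τ, n (s + θ) := by
    rw [← intervalIntegral.integral_const_mul]
    refine intervalIntegral.integral_congr fun θ _ => ?_
    simp only
    unfold avgA1
    rw [hnuBar θ]
    have h1 : (∫ τ in (0:ℝ)..2 * Real.pi, g (Rot τ (Rot θ v))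
        * ∫ s in (0:ℝ)..τ, ν (Rot s (Rot θ v)))
        = ∫ τ in (0:ℝ)..2 * Real.pi, f (τ + θ) * ∫ s in (0:ℝ)..τ, n (s + θ) := by
      refine intervalIntegral.integral_congr fun τ _ => ?_
      simp only [hfdef, hndef]
      rw [Rot_Rot]
      congr 1
      refine intervalIntegral.integral_congr fun s _ => ?_
      rw [Rot_Rot]
    rw [h1]
    ring
  rw [hmain, hkey]
  ring
end
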